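/- arXiv:2407.00212 — 4 statements merged into one kernel-verified Lean document; each statement's English description precedes it below -/
import Mathlib

section
/- Let H be a real Hilbert space, let A be a bounded self-adjoint operator on H, and let M be a bounded positive self-adjoint operator on H. Then the operator S := A + (A² + M)^{1/2} is positive, i.e. S is self-adjoint and ⟨S v, v⟩ ≥ 0 for all v ∈ H. -/
open ContinuousLinearMap RealInnerProductSpace

/-- Cauchy–Schwarz inequality for the semi-inner product defined by a positive
symmetric operator. -/
private lemma cs_pos {H : Type*} [NormedAddCommGroup H] [InnerProductSpace ℝ H]
    (P : H →L[ℝ] H) (hPsym : ∀ x y : H, ⟪P x, y⟫ = ⟪x, P y⟫)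
    (hpos : ∀ v : H, 0 ≤ ⟪P v, v⟫) (u w : H) :
    ⟪P u, w⟫ ^ 2 ≤ ⟪P u, u⟫ * ⟪P w, w⟫ := by
  have hsymm : ⟪P w, u⟫ = ⟪P u, w⟫ := by
    rw [hPsym w u, real_inner_comm]
  have key : ∀ t : ℝ, 0 ≤ ⟪P u, u⟫ * (t * t) + (2 * ⟪P u, w⟫) * t + ⟪P w, w⟫ := by
    intro t
    have h := hpos (t • u + w)
    have expand : ⟪P (t • u + w), t • u + w⟫ =
        ⟪P u, u⟫ * (t * t) + (2 * ⟪P u, w⟫) * t + ⟪P w, w⟫ := by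
      simp only [map_add, map_smul, inner_add_left, inner_add_right,
        real_inner_smul_left, real_inner_smul_right]
      rw [hsymm]; ring
    linarith [expand ▸ h]
  have hdisc := discrim_le_zero key
  rw [discrim] at hdisc
  nlinarith [hdisc]

/-- Norm bound for a positive symmetric operator: `‖P u‖ ^ 2 ≤ ‖P‖ * ⟪P u, u⟫`. -/
private lemma norm_app_sq_le {H : Type*} [NormedAddCommGroup H] [InnerProductSpace ℝ H]
    (P : H →L[ℝ] H) (hPsym : ∀ x y : H, ⟪P x, y⟫ = ⟪x, P y⟫)
    (hpos : ∀ v : H, 0 ≤ ⟪P v, v⟫) (u : H) :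
    ‖P u‖ ^ 2 ≤ ‖P‖ * ⟪P u, u⟫ := by
  rcases eq_or_ne (P u) 0 with h0 | h0
  · simp only [h0, norm_zero, inner_zero_left]
    have : (0:ℝ) ^ 2 = 0 := by norm_num
    rw [this, mul_zero]
  · have h1 : ⟪P u, P u⟫ ^ 2 ≤ ⟪P u, u⟫ * ⟪P (P u), P u⟫ := cs_pos P hPsym hpos u (P u)
    have h2 : ⟪P u, P u⟫ = ‖P u‖ ^ 2 := real_inner_self_eq_norm_sq (P u)
    have h3 : ⟪P (P u), P u⟫ ≤ ‖P (P u)‖ * ‖P u‖ := real_inner_le_norm _ _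
    have h4 : ‖P (P u)‖ ≤ ‖P‖ * ‖P u‖ := P.le_opNorm (P u)
    have h5 : (0:ℝ) < ‖P u‖ := norm_pos_iff.mpr h0
    have h6 : 0 ≤ ⟪P u, u⟫ := hpos u
    have h8 : ⟪P (P u), P u⟫ ≤ ‖P‖ * ‖P u‖ ^ 2 := by nlinarith [norm_nonneg (P (P u))]
    have h9 : ⟪P u, u⟫ * ⟪P (P u), P u⟫ ≤ ⟪P u, u⟫ * (‖P‖ * ‖P u‖ ^ 2) :=
      mul_le_mul_of_nonneg_left h8 h6
    have h9' : ⟪P u, u⟫ * ⟪P (P u), P u⟫ ≤ ‖P‖ * ⟪P u, u⟫ * ⟪P u, P u⟫ := by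
      rw [h2]; linarith [h9]
    have h7 : ‖P u‖ ^ 2 * ‖P u‖ ^ 2 ≤ ‖P‖ * ⟪P u, u⟫ * ‖P u‖ ^ 2 := by
      rw [← h2]; nlinarith [h1, h9']
    exact le_of_mul_le_mul_right h7 (by positivity)

set_option maxHeartbeats 1000000 in
/-- The algebraic Riccati solution `S := A + (A² + M)^{1/2}` is a positive operator. -/
theorem stmt_2
    {H : Type*} [NormedAddCommGroup H] [InnerProductSpace ℝ H] [CompleteSpace H]
    (A M sq : H →L[ℝ] H)
    (hA : IsSelfAdjoint A)
    (hM : IsSelfAdjoint M) (hMpos : ∀ v : H, 0 ≤ ⟪M v, v⟫)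
    (hsq_sa : IsSelfAdjoint sq) (hsq_pos : ∀ v : H, 0 ≤ ⟪sq v, v⟫)
    (hsq : sq.comp sq = A.comp A + M) :
    IsSelfAdjoint (A + sq) ∧ ∀ v : H, 0 ≤ ⟪(A + sq) v, v⟫ := by
  have hCsa : IsSelfAdjoint (A + sq) := hA.add hsq_sa
  refine ⟨hCsa, ?_⟩
  by_contra hcon
  push_neg at hcon
  obtain ⟨v, hv⟩ := hcon
  set C : H →L[ℝ] H := A + sq with hCdef
  have hAsym : ∀ x y : H, ⟪A x, y⟫ = ⟪x, A y⟫ := fun x y => hA.isSymmetric x y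
  have hsqsym : ∀ x y : H, ⟪sq x, y⟫ = ⟪x, sq y⟫ := fun x y => hsq_sa.isSymmetric x y
  have hCsym : ∀ x y : H, ⟪C x, y⟫ = ⟪x, C y⟫ := fun x y => hCsa.isSymmetric x y
  have hv0 : v ≠ 0 := by
    rintro rfl
    simp at hv
  have hvn : (0:ℝ) < ‖v‖ := norm_pos_iff.mpr hv0
  -- the set of Rayleigh quotients on the unit sphere
  set S : Set ℝ := {x | ∃ u : H, ‖u‖ = 1 ∧ ⟪C u, u⟫ = x} with hSdef
  have hu₀norm : ‖(‖v‖⁻¹ • v)‖ = 1 := by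
    rw [norm_smul, norm_inv, norm_norm, inv_mul_cancel₀ hvn.ne']
  have hscale : ∀ (w : H), ⟪C (‖w‖⁻¹ • w), ‖w‖⁻¹ • w⟫ = ‖w‖⁻¹ * ‖w‖⁻¹ * ⟪C w, w⟫ := by
    intro w
    rw [map_smul, real_inner_smul_left, real_inner_smul_right]
    ring
  have hu₀C : ⟪C (‖v‖⁻¹ • v), ‖v‖⁻¹ • v⟫ < 0 := by
    rw [hscale v]
    have h2 : (0:ℝ) < ‖v‖⁻¹ := inv_pos.mpr hvn
    nlinarith [mul_pos h2 h2, hv]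
  have hSne : S.Nonempty := ⟨_, _, hu₀norm, rfl⟩
  have hSbdd : BddBelow S := by
    refine ⟨-‖C‖, ?_⟩
    rintro x ⟨u, hu, rfl⟩
    have h2 := abs_real_inner_le_norm (C u) u
    have h3 := C.le_opNorm u
    rw [hu, mul_one] at *
    have : |⟪C u, u⟫| ≤ ‖C‖ := le_trans h2 h3
    linarith [abs_le.mp this]
  set m : ℝ := sInf S with hmdef
  have hm_neg : m < 0 := lt_of_le_of_lt (csInf_le hSbdd ⟨_, hu₀norm, rfl⟩) hu₀C
  have hPform : ∀ w : H, m * ‖w‖ ^ 2 ≤ ⟪C w, w⟫ := by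
    intro w
    rcases eq_or_ne w 0 with rfl | hw
    · simp
    · have hwn : (0:ℝ) < ‖w‖ := norm_pos_iff.mpr hw
      have hunorm : ‖(‖w‖⁻¹ • w)‖ = 1 := by
        rw [norm_smul, norm_inv, norm_norm, inv_mul_cancel₀ hwn.ne']
      have h1 : m ≤ ‖w‖⁻¹ * ‖w‖⁻¹ * ⟪C w, w⟫ := by
        rw [← hscale w]
        exact csInf_le hSbdd ⟨_, hunorm, rfl⟩
      have h2 := mul_le_mul_of_nonneg_right h1 (sq_nonneg ‖w‖)
      have hinv : ‖w‖⁻¹ * ‖w‖ = 1 := inv_mul_cancel₀ hwn.ne'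
      have h3 : (‖w‖⁻¹ * ‖w‖⁻¹ * ⟪C w, w⟫) * ‖w‖ ^ 2 = ⟪C w, w⟫ := by
        linear_combination (⟪C w, w⟫ * (‖w‖⁻¹ * ‖w‖ + 1)) * hinv
      rw [h3] at h2
      exact h2
  -- the positive operator P = C - m • 1
  set P : H →L[ℝ] H := C - m • (1 : H →L[ℝ] H) with hPdef
  have hPapp : ∀ w : H, P w = C w - m • w := by
    intro w
    simp [hPdef, sub_apply, smul_apply, one_apply]
  have hPsym : ∀ x y : H, ⟪P x, y⟫ = ⟪x, P y⟫ := by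
    intro x y
    simp only [hPapp, inner_sub_left, inner_sub_right, real_inner_smul_left,
      real_inner_smul_right, hCsym x y]
  have hPpos : ∀ w : H, 0 ≤ ⟪P w, w⟫ := by
    intro w
    have h1 := hPform w
    simp only [hPapp, inner_sub_left, real_inner_smul_left]
    rw [real_inner_self_eq_norm_sq]
    linarith
  -- main estimate: m ^ 2 ≤ ε for every ε > 0
  have hmain : m ^ 2 ≤ 0 := by
    refine le_of_forall_pos_le_add ?_
    intro ε hε
    rw [zero_add]
    set K : ℝ := |m| + ‖sq‖ + 1 with hKdef
    have hK : (0:ℝ) < K := by positivity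
    set δ : ℝ := ε ^ 2 / (4 * K ^ 2 * (‖P‖ + 1)) with hδdef
    have hδ : (0:ℝ) < δ := by positivity
    obtain ⟨x, hxS, hxlt⟩ := exists_lt_of_csInf_lt hSne (show m < m + δ by linarith)
    obtain ⟨u, hu1, rfl⟩ := hxS
    -- the defect d = P u is small
    set d : H := P u with hddef
    have hPu : ⟪P u, u⟫ < δ := by
      have heq : ⟪P u, u⟫ = ⟪C u, u⟫ - m := by
        rw [hPapp, inner_sub_left, real_inner_smul_left, real_inner_self_eq_norm_sq, hu1]
        ring
      linarith [hxlt, heq]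
    have hd1 : ‖d‖ ^ 2 ≤ ‖P‖ * δ := by
      have h1 := norm_app_sq_le P hPsym hPpos u
      have h2 : ‖P‖ * ⟪P u, u⟫ ≤ ‖P‖ * δ :=
        mul_le_mul_of_nonneg_left hPu.le (norm_nonneg P)
      rw [hddef]
      exact le_trans h1 h2
    -- ‖A u‖² ≤ ‖sq u‖²
    have hsqu := congrArg (fun T : H →L[ℝ] H => T u) hsq
    simp only [comp_apply, add_apply] at hsqu
    have hBB : ⟪sq (sq u), u⟫ = ‖sq u‖ ^ 2 := by
      rw [hsqsym (sq u) u, real_inner_comm, real_inner_self_eq_norm_sq]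
    have hAA : ⟪A (A u), u⟫ = ‖A u‖ ^ 2 := by
      rw [hAsym (A u) u, real_inner_comm, real_inner_self_eq_norm_sq]
    have hnorms : ‖A u‖ ^ 2 ≤ ‖sq u‖ ^ 2 := by
      have h1 : ⟪sq (sq u), u⟫ = ⟪A (A u), u⟫ + ⟪M u, u⟫ := by
        rw [hsqu, inner_add_left]
      rw [hBB, hAA] at h1
      linarith [hMpos u]
    -- A u = m • u + d - sq u
    have hAu : A u = (m • u + d) - sq u := by
      have hd' : d = A u + sq u - m • u := by
        rw [hddef, hPapp u]
        simp [hCdef, add_apply]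
      rw [hd']; abel
    -- expand norms
    have hexp1 : ‖A u‖ ^ 2 =
        ‖m • u + d‖ ^ 2 - 2 * ⟪m • u + d, sq u⟫ + ‖sq u‖ ^ 2 := by
      rw [hAu, norm_sub_sq_real]
    have hexp2 : ‖m • u + d‖ ^ 2 = m ^ 2 + 2 * (m * ⟪u, d⟫) + ‖d‖ ^ 2 := by
      rw [norm_add_sq_real, norm_smul, real_inner_smul_left, hu1]
      simp [Real.norm_eq_abs, sq_abs]
    have hexp3 : ⟪m • u + d, sq u⟫ = m * ⟪u, sq u⟫ + ⟪d, sq u⟫ := by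
      rw [inner_add_left, real_inner_smul_left]
    -- bounds
    have hb1 : 0 ≤ ⟪u, sq u⟫ := by rw [real_inner_comm]; exact hsq_pos u
    have hb2 : m * ⟪u, sq u⟫ ≤ 0 := mul_nonpos_of_nonpos_of_nonneg hm_neg.le hb1
    have hb3 : ⟪d, sq u⟫ ≤ ‖d‖ * ‖sq‖ := by
      have h1 := real_inner_le_norm d (sq u)
      have h2 : ‖sq u‖ ≤ ‖sq‖ := by
        have := sq.le_opNorm u
        rwa [hu1, mul_one] at this
      nlinarith [norm_nonneg d]
    have hb4 : |⟪u, d⟫| ≤ ‖d‖ := by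
      have := abs_real_inner_le_norm u d
      rwa [hu1, one_mul] at this
    have hb4' := abs_le.mp hb4
    have habs : |m| = -m := abs_of_neg hm_neg
    -- combine: m ^ 2 ≤ 2 ‖d‖ (-m) + 2 ‖d‖ ‖sq‖
    have hstep : m ^ 2 + 2 * (m * ⟪u, d⟫) + ‖d‖ ^ 2 ≤
        2 * (m * ⟪u, sq u⟫ + ⟪d, sq u⟫) := by
      rw [← hexp2, ← hexp3]
      linarith [hexp1, hnorms]
    have hmd : 0 ≤ (-m) * (‖d‖ - ⟪u, d⟫) :=
      mul_nonneg (by linarith) (by linarith [hb4'.2])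
    have hkey : m ^ 2 ≤ 2 * (‖d‖ * (-m)) + 2 * (‖d‖ * ‖sq‖) := by
      nlinarith [hstep, hmd, hb2, hb3, sq_nonneg ‖d‖]
    -- ‖d‖ ≤ ε / (2K), i.e. 2K‖d‖ ≤ ε
    have e1 : (ε / (2 * K)) ^ 2 = ε ^ 2 / (4 * K ^ 2) := by
      rw [div_pow]; congr 1; ring
    have h1 : ‖P‖ * δ ≤ (ε / (2 * K)) ^ 2 := by
      rw [e1, hδdef, mul_div_assoc']
      rw [div_le_div_iff₀ (by positivity) (by positivity)]
      nlinarith [mul_nonneg (sq_nonneg ε) (sq_nonneg K)]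
    have hd2 : ‖d‖ ^ 2 ≤ (ε / (2 * K)) ^ 2 := le_trans hd1 h1
    have ht : (0:ℝ) < ε / (2 * K) := by positivity
    have hsum : (0:ℝ) < ‖d‖ + ε / (2 * K) := by positivity
    have hdle : ‖d‖ ≤ ε / (2 * K) := by
      nlinarith [hd2, hsum, norm_nonneg d]
    have hdle' : ‖d‖ * (2 * K) ≤ ε := (le_div_iff₀ (by positivity)).mp hdle
    have h2K : ‖d‖ * (2 * K) = 2 * (‖d‖ * (-m)) + 2 * (‖d‖ * ‖sq‖) + 2 * ‖d‖ := by
      rw [hKdef]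
      linear_combination (2 * ‖d‖) * habs
    linarith [hkey, hdle', h2K, norm_nonneg d]
  nlinarith [hm_neg, hmain]
end

section
/- Let H be a separable real Hilbert space, let A be a bounded self-adjoint operator on H, and let (φ_k)_{k∈ℕ} be a Hilbert (orthonormal and complete) basis of H consisting of eigenvectors of A, with A φ_k = λ_k φ_k. Let a ∈ ℝ, suppose the supremum λ̄ := sup_k λ_k is attained at some index k̄ and the infimum λ̲ := inf_k λ_k is attained at some index k̲, and define S := (A + a·I) + ((A + a·I)² + I)^{1/2}, using the unique positive square root. Then for every unit vector ψ ∈ H, (λ̲ + a) + √((λ̲ + a)² + 1) ≤ ⟨S ψ, ψ⟩ ≤ (λ̄ + a) + √((λ̄ + a)² + 1); moreover the upper bound is attained at ψ = φ_{k̄} and the lower bound is attained at ψ = φ_{k̲}. -/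
open ContinuousLinearMap RealInnerProductSpace

private lemma f_mono_aux {u v : ℝ} (h : u ≤ v) :
    u + Real.sqrt (u ^ 2 + 1) ≤ v + Real.sqrt (v ^ 2 + 1) := by
  have hp0 : 0 ≤ Real.sqrt (u ^ 2 + 1) := Real.sqrt_nonneg _
  have hq0 : 0 ≤ Real.sqrt (v ^ 2 + 1) := Real.sqrt_nonneg _
  have hp2 : Real.sqrt (u ^ 2 + 1) ^ 2 = u ^ 2 + 1 := Real.sq_sqrt (by positivity)
  have hq2 : Real.sqrt (v ^ 2 + 1) ^ 2 = v ^ 2 + 1 := Real.sq_sqrt (by positivity)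
  set p := Real.sqrt (u ^ 2 + 1)
  set q := Real.sqrt (v ^ 2 + 1)
  have hpu : -u ≤ p := by nlinarith
  have hqv : -v ≤ q := by nlinarith
  have hp1 : 1 ≤ p := by nlinarith
  nlinarith [mul_nonneg (sub_nonneg.2 h) (by linarith : (0:ℝ) ≤ p + q + u + v)]

set_option maxHeartbeats 1000000 in
/-- Maximum trace lemma: when `A` has an orthonormal eigenbasis with eigenvalues
attaining their supremum and infimum, the quadratic form of
`S := (A + aI) + ((A + aI)² + I)^{1/2}` over unit vectors is pinched between
`(λ̲ + a) + √((λ̲ + a)² + 1)` and `(λ̄ + a) + √((λ̄ + a)² + 1)`, with the bounds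
attained at the corresponding eigenvectors. -/
theorem stmt_6
    {H : Type*} [NormedAddCommGroup H] [InnerProductSpace ℝ H] [CompleteSpace H]
    (A sq : H →L[ℝ] H) (a : ℝ)
    (hA : IsSelfAdjoint A)
    (b : HilbertBasis ℕ ℝ H) (lam : ℕ → ℝ)
    (heig : ∀ k, A (b k) = lam k • b k)
    (kmax kmin : ℕ)
    (hkmax : ∀ k, lam k ≤ lam kmax)
    (hkmin : ∀ k, lam kmin ≤ lam k)
    (hsq_sa : IsSelfAdjoint sq) (hsq_pos : ∀ v : H, 0 ≤ ⟪sq v, v⟫)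
    (hsq : sq.comp sq
      = (A + a • ContinuousLinearMap.id ℝ H).comp (A + a • ContinuousLinearMap.id ℝ H)
        + ContinuousLinearMap.id ℝ H) :
    (∀ ψ : H, ‖ψ‖ = 1 →
        (lam kmin + a) + Real.sqrt ((lam kmin + a) ^ 2 + 1)
          ≤ ⟪((A + a • ContinuousLinearMap.id ℝ H) + sq) ψ, ψ⟫ ∧
        ⟪((A + a • ContinuousLinearMap.id ℝ H) + sq) ψ, ψ⟫
          ≤ (lam kmax + a) + Real.sqrt ((lam kmax + a) ^ 2 + 1)) ∧
    ⟪((A + a • ContinuousLinearMap.id ℝ H) + sq) (b kmax), b kmax⟫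
      = (lam kmax + a) + Real.sqrt ((lam kmax + a) ^ 2 + 1) ∧
    ⟪((A + a • ContinuousLinearMap.id ℝ H) + sq) (b kmin), b kmin⟫
      = (lam kmin + a) + Real.sqrt ((lam kmin + a) ^ 2 + 1) := by
  set B := A + a • ContinuousLinearMap.id ℝ H with hBdef
  set S := B + sq with hSdef
  -- eigenvector action of B
  have hBeig : ∀ k, B (b k) = (lam k + a) • b k := by
    intro k
    simp [hBdef, heig k, add_smul]
  -- eigenvector action of sq
  have hsqeig : ∀ k, sq (b k) = Real.sqrt ((lam k + a) ^ 2 + 1) • b k := by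
    intro k
    set μ := lam k + a
    set s := Real.sqrt (μ ^ 2 + 1) with hsdef
    have hs2 : s ^ 2 = μ ^ 2 + 1 := Real.sq_sqrt (by positivity)
    have hs1 : 1 ≤ s := by
      have hs0 : 0 ≤ s := Real.sqrt_nonneg _
      nlinarith
    have hnu : sq (sq (b k)) = (μ ^ 2 + 1) • b k := by
      have h := congrArg (fun T : H →L[ℝ] H => T (b k)) hsq
      simp only [ContinuousLinearMap.comp_apply, ContinuousLinearMap.add_apply,
        ContinuousLinearMap.id_apply] at h
      rw [h, hBeig k, map_smul, hBeig k, smul_smul]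
      rw [add_smul, one_smul]
      ring_nf
      rw [show lam k * a * 2 + lam k ^ 2 + a ^ 2 = μ ^ 2 by rw [show μ = lam k + a from rfl]; ring]
    set w := sq (b k) - s • b k with hwdef
    have hw0 : sq w + s • w = 0 := by
      have : sq w + s • w = ((μ ^ 2 + 1) - s * s) • b k := by
        simp only [hwdef, map_sub, map_smul, smul_sub, hnu, smul_smul]
        module
      rw [this]
      have : (μ ^ 2 + 1) - s * s = 0 := by nlinarith
      rw [this, zero_smul]
    have hinner : ⟪sq w, w⟫ + s * ⟪w, w⟫ = 0 := by
      have := congrArg (fun v => ⟪v, w⟫) hw0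
      simpa [inner_add_left, inner_smul_left] using this
    have hww : ⟪w, w⟫ = 0 := by
      have h1 := hsq_pos w
      have h2 : (0:ℝ) ≤ ⟪w, w⟫ := real_inner_self_nonneg
      nlinarith
    have hwz : w = 0 := by
      rwa [inner_self_eq_zero] at hww
    have : sq (b k) - s • b k = 0 := hwz
    linear_combination (norm := abel) this
  -- eigenvector action of S
  have hSeig : ∀ k, S (b k)
      = ((lam k + a) + Real.sqrt ((lam k + a) ^ 2 + 1)) • b k := by
    intro k
    simp only [hSdef, ContinuousLinearMap.add_apply, hBeig k, hsqeig k, add_smul]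
  have hbnorm : ∀ k, ⟪b k, b k⟫ = (1:ℝ) := by
    intro k
    have := b.orthonormal.1 k
    rw [real_inner_self_eq_norm_sq, this, one_pow]
  have hSval : ∀ k, ⟪S (b k), b k⟫
      = (lam k + a) + Real.sqrt ((lam k + a) ^ 2 + 1) := by
    intro k
    rw [hSeig k, real_inner_smul_left, hbnorm k, mul_one]
  -- symmetry of S
  have hSsym : ∀ x y : H, ⟪S x, y⟫ = ⟪x, S y⟫ := by
    intro x y
    have h1 := hA.isSymmetric x y
    have h2 := hsq_sa.isSymmetric x y
    simp only [ContinuousLinearMap.coe_coe] at h1 h2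
    simp only [hSdef, hBdef, ContinuousLinearMap.add_apply, ContinuousLinearMap.coe_smul',
      Pi.smul_apply, ContinuousLinearMap.id_apply, inner_add_left, inner_add_right,
      real_inner_smul_left, real_inner_smul_right, h1, h2]
  refine ⟨?_, hSval kmax, hSval kmin⟩
  intro ψ hψ
  have hψ2 : ⟪ψ, ψ⟫ = (1:ℝ) := by
    rw [real_inner_self_eq_norm_sq, hψ, one_pow]
  have h1 : HasSum (fun k => ⟪S ψ, b k⟫ * ⟪b k, ψ⟫) ⟪S ψ, ψ⟫ :=
    b.hasSum_inner_mul_inner _ _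
  have h2 : HasSum (fun k => ⟪ψ, b k⟫ * ⟪b k, ψ⟫) (1:ℝ) := by
    have := b.hasSum_inner_mul_inner ψ ψ
    rwa [hψ2] at this
  have hterm : ∀ k, ⟪S ψ, b k⟫ * ⟪b k, ψ⟫
      = ((lam k + a) + Real.sqrt ((lam k + a) ^ 2 + 1)) * (⟪ψ, b k⟫ * ⟪b k, ψ⟫) := by
    intro k
    rw [hSsym ψ (b k), hSeig k,
      real_inner_smul_right]
    ring
  have hc2 : ∀ k, (0:ℝ) ≤ ⟪ψ, b k⟫ * ⟪b k, ψ⟫ := by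
    intro k
    rw [real_inner_comm (b k) ψ]
    exact mul_self_nonneg _
  constructor
  · have hle : ∀ k, ((lam kmin + a) + Real.sqrt ((lam kmin + a) ^ 2 + 1))
        * (⟪ψ, b k⟫ * ⟪b k, ψ⟫) ≤ ⟪S ψ, b k⟫ * ⟪b k, ψ⟫ := by
      intro k
      rw [hterm k]
      exact mul_le_mul_of_nonneg_right
        (f_mono_aux (by linarith [hkmin k])) (hc2 k)
    have := hasSum_le hle (h2.mul_left _) h1
    simpa using this
  · have hle : ∀ k, ⟪S ψ, b k⟫ * ⟪b k, ψ⟫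
        ≤ ((lam kmax + a) + Real.sqrt ((lam kmax + a) ^ 2 + 1))
          * (⟪ψ, b k⟫ * ⟪b k, ψ⟫) := by
      intro k
      rw [hterm k]
      exact mul_le_mul_of_nonneg_right
        (f_mono_aux (by linarith [hkmax k])) (hc2 k)
    have := hasSum_le hle h1 (h2.mul_left _)
    simpa using this
end

section
/- Let H be a real Hilbert space and T > 0. Let A, H₀, M, M_T and, for each N ∈ ℕ, Aᴺ, H₀ᴺ, Mᴺ, M_Tᴺ be bounded linear operators on H such that ‖Aᴺ − A‖, ‖H₀ᴺ − H₀‖, ‖Mᴺ − M‖ and ‖M_Tᴺ − M_T‖ all tend to 0 (in operator norm) as N → ∞. Let S, Sᴺ : [0,T] → B(H) be continuously differentiable families of bounded self-adjoint operators solving the backward Riccati equations −(d/dt)S(t) = A* S(t) + S(t) A − S(t) H₀ H₀* S(t) + M with S(T) = M_T, and −(d/dt)Sᴺ(t) = Aᴺ* Sᴺ(t) + Sᴺ(t) Aᴺ − Sᴺ(t) H₀ᴺ H₀ᴺ* Sᴺ(t) + Mᴺ with Sᴺ(T) = M_Tᴺ. Assume there is a constant K such that ‖S(t)‖ ≤ K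 and ‖Sᴺ(t)‖ ≤ K for all N and all t ∈ [0,T]. Then for every t ∈ [0,T], ‖Sᴺ(t) − S(t)‖ → 0 in operator norm as N → ∞. -/
open ContinuousLinearMap Filter

set_option maxHeartbeats 1000000 in

lemma riccati_est {H : Type*} [NormedAddCommGroup H] [InnerProductSpace ℝ H] [CompleteSpace H]
    (A A' H0 H0' M M' St St' : H →L[ℝ] H) (K : ℝ)
    (hS : ‖St‖ ≤ K) (hSN : ‖St'‖ ≤ K) :
    ‖((adjoint A').comp St' + St'.comp A' - St'.comp (H0'.comp ((adjoint H0').comp St')) + M')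
      - ((adjoint A).comp St + St.comp A - St.comp (H0.comp ((adjoint H0).comp St)) + M)‖
    ≤ (2 * ‖A'‖ + ‖H0'‖ ^ 2 * K + K * ‖H0‖ ^ 2) * ‖St' - St‖
      + (2 * K * ‖A' - A‖ + K ^ 2 * (‖H0'‖ + ‖H0‖) * ‖H0' - H0‖ + ‖M' - M‖) := by
  have hK0 : 0 ≤ K := le_trans (norm_nonneg _) hS
  set D := St' - St with hD
  have hadj : ∀ X : H →L[ℝ] H, ‖adjoint X‖ = ‖X‖ := fun X => adjoint.norm_map X
  -- term 1
  have h1 : ‖(adjoint A') * St' - (adjoint A) * St‖ ≤ ‖A'‖ * ‖D‖ + K * ‖A' - A‖ := by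
    have e : (adjoint A') * St' - (adjoint A) * St
        = (adjoint A') * D + (adjoint (A' - A)) * St := by
      rw [map_sub]; rw [hD]; noncomm_ring
    rw [e]
    calc ‖(adjoint A') * D + (adjoint (A' - A)) * St‖
        ≤ ‖(adjoint A') * D‖ + ‖(adjoint (A' - A)) * St‖ := norm_add_le _ _
      _ ≤ ‖adjoint A'‖ * ‖D‖ + ‖adjoint (A' - A)‖ * ‖St‖ :=
          add_le_add (norm_mul_le _ _) (norm_mul_le _ _)
      _ ≤ ‖A'‖ * ‖D‖ + K * ‖A' - A‖ := by
          rw [hadj, hadj]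
          have := mul_le_mul_of_nonneg_left hS (norm_nonneg (A' - A))
          nlinarith [norm_nonneg (A' - A)]
  -- term 2
  have h2 : ‖St' * A' - St * A‖ ≤ ‖A'‖ * ‖D‖ + K * ‖A' - A‖ := by
    have e : St' * A' - St * A = D * A' + St * (A' - A) := by rw [hD]; noncomm_ring
    rw [e]
    calc ‖D * A' + St * (A' - A)‖ ≤ ‖D * A'‖ + ‖St * (A' - A)‖ := norm_add_le _ _
      _ ≤ ‖D‖ * ‖A'‖ + ‖St‖ * ‖A' - A‖ := add_le_add (norm_mul_le _ _) (norm_mul_le _ _)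
      _ ≤ ‖A'‖ * ‖D‖ + K * ‖A' - A‖ := by
          rw [mul_comm ‖D‖]
          exact add_le_add le_rfl (mul_le_mul_of_nonneg_right hS (norm_nonneg _))
  -- quadratic term
  set G := H0 * (adjoint H0) with hG
  set G' := H0' * (adjoint H0') with hG'
  have hGd : ‖G' - G‖ ≤ (‖H0'‖ + ‖H0‖) * ‖H0' - H0‖ := by
    have e : G' - G = H0' * (adjoint (H0' - H0)) + (H0' - H0) * (adjoint H0) := by
      rw [hG, hG', map_sub]; noncomm_ring
    rw [e]
    calc ‖H0' * (adjoint (H0' - H0)) + (H0' - H0) * (adjoint H0)‖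
        ≤ ‖H0' * (adjoint (H0' - H0))‖ + ‖(H0' - H0) * (adjoint H0)‖ := norm_add_le _ _
      _ ≤ ‖H0'‖ * ‖adjoint (H0' - H0)‖ + ‖H0' - H0‖ * ‖adjoint H0‖ :=
          add_le_add (norm_mul_le _ _) (norm_mul_le _ _)
      _ = (‖H0'‖ + ‖H0‖) * ‖H0' - H0‖ := by rw [hadj, hadj]; ring
  have h3 : ‖St' * (G' * St') - St * (G * St)‖
      ≤ (‖H0'‖ ^ 2 * K + K * ‖H0‖ ^ 2) * ‖D‖ + K ^ 2 * (‖H0'‖ + ‖H0‖) * ‖H0' - H0‖ := by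
    have e : St' * (G' * St') - St * (G * St)
        = D * (G' * St') + St * ((G' - G) * St') + St * (G * D) := by rw [hD]; noncomm_ring
    have hG'n : ‖G'‖ ≤ ‖H0'‖ ^ 2 := by
      calc ‖G'‖ ≤ ‖H0'‖ * ‖adjoint H0'‖ := norm_mul_le _ _
        _ = ‖H0'‖ ^ 2 := by rw [hadj]; ring
    have hGn : ‖G‖ ≤ ‖H0‖ ^ 2 := by
      calc ‖G‖ ≤ ‖H0‖ * ‖adjoint H0‖ := norm_mul_le _ _
        _ = ‖H0‖ ^ 2 := by rw [hadj]; ring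
    rw [e]
    have b1 : ‖D * (G' * St')‖ ≤ ‖D‖ * (‖H0'‖ ^ 2 * K) := by
      calc ‖D * (G' * St')‖ ≤ ‖D‖ * ‖G' * St'‖ := norm_mul_le _ _
        _ ≤ ‖D‖ * (‖G'‖ * ‖St'‖) :=
            mul_le_mul_of_nonneg_left (norm_mul_le _ _) (norm_nonneg _)
        _ ≤ ‖D‖ * (‖H0'‖ ^ 2 * K) := by
            refine mul_le_mul_of_nonneg_left ?_ (norm_nonneg _)
            exact mul_le_mul hG'n hSN (norm_nonneg _) (by positivity)
    have b2 : ‖St * ((G' - G) * St')‖ ≤ K * ((‖H0'‖ + ‖H0‖) * ‖H0' - H0‖ * K) := by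
      calc ‖St * ((G' - G) * St')‖ ≤ ‖St‖ * (‖G' - G‖ * ‖St'‖) := by
            refine le_trans (norm_mul_le _ _) ?_
            exact mul_le_mul_of_nonneg_left (norm_mul_le _ _) (norm_nonneg _)
        _ ≤ K * ((‖H0'‖ + ‖H0‖) * ‖H0' - H0‖ * K) := by
            refine mul_le_mul hS ?_ (by positivity) hK0
            exact mul_le_mul hGd hSN (norm_nonneg _) (by positivity)
    have b3 : ‖St * (G * D)‖ ≤ K * (‖H0‖ ^ 2 * ‖D‖) := by
      calc ‖St * (G * D)‖ ≤ ‖St‖ * (‖G‖ * ‖D‖) := by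
            refine le_trans (norm_mul_le _ _) ?_
            exact mul_le_mul_of_nonneg_left (norm_mul_le _ _) (norm_nonneg _)
        _ ≤ K * (‖H0‖ ^ 2 * ‖D‖) := by
            refine mul_le_mul hS ?_ (by positivity) hK0
            exact mul_le_mul_of_nonneg_right hGn (norm_nonneg _)
    calc ‖D * (G' * St') + St * ((G' - G) * St') + St * (G * D)‖
        ≤ ‖D * (G' * St') + St * ((G' - G) * St')‖ + ‖St * (G * D)‖ := norm_add_le _ _
      _ ≤ ‖D * (G' * St')‖ + ‖St * ((G' - G) * St')‖ + ‖St * (G * D)‖ :=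
          add_le_add (norm_add_le _ _) le_rfl
      _ ≤ ‖D‖ * (‖H0'‖ ^ 2 * K) + K * ((‖H0'‖ + ‖H0‖) * ‖H0' - H0‖ * K)
            + K * (‖H0‖ ^ 2 * ‖D‖) := add_le_add (add_le_add b1 b2) b3
      _ = (‖H0'‖ ^ 2 * K + K * ‖H0‖ ^ 2) * ‖D‖ + K ^ 2 * (‖H0'‖ + ‖H0‖) * ‖H0' - H0‖ := by
          ring
  -- combine
  have key : ((adjoint A') * St' + St' * A' - St' * (G' * St') + M')
      - ((adjoint A) * St + St * A - St * (G * St) + M)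
      = ((adjoint A') * St' - (adjoint A) * St) + (St' * A' - St * A)
        - (St' * (G' * St') - St * (G * St)) + (M' - M) := by abel
  have main : ‖((adjoint A') * St' + St' * A' - St' * (G' * St') + M')
      - ((adjoint A) * St + St * A - St * (G * St) + M)‖
      ≤ (2 * ‖A'‖ + ‖H0'‖ ^ 2 * K + K * ‖H0‖ ^ 2) * ‖D‖
        + (2 * K * ‖A' - A‖ + K ^ 2 * (‖H0'‖ + ‖H0‖) * ‖H0' - H0‖ + ‖M' - M‖) := by
    rw [key]
    calc ‖((adjoint A') * St' - (adjoint A) * St) + (St' * A' - St * A)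
          - (St' * (G' * St') - St * (G * St)) + (M' - M)‖
        ≤ ‖((adjoint A') * St' - (adjoint A) * St) + (St' * A' - St * A)
          - (St' * (G' * St') - St * (G * St))‖ + ‖M' - M‖ := norm_add_le _ _
      _ ≤ ‖((adjoint A') * St' - (adjoint A) * St) + (St' * A' - St * A)‖
          + ‖St' * (G' * St') - St * (G * St)‖ + ‖M' - M‖ :=
          add_le_add (norm_sub_le _ _) le_rfl
      _ ≤ ‖(adjoint A') * St' - (adjoint A) * St‖ + ‖St' * A' - St * A‖
          + ‖St' * (G' * St') - St * (G * St)‖ + ‖M' - M‖ :=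
          add_le_add (add_le_add (norm_add_le _ _) le_rfl) le_rfl
      _ ≤ (‖A'‖ * ‖D‖ + K * ‖A' - A‖) + (‖A'‖ * ‖D‖ + K * ‖A' - A‖)
          + ((‖H0'‖ ^ 2 * K + K * ‖H0‖ ^ 2) * ‖D‖ + K ^ 2 * (‖H0'‖ + ‖H0‖) * ‖H0' - H0‖)
          + ‖M' - M‖ := add_le_add (add_le_add (add_le_add h1 h2) h3) le_rfl
      _ = (2 * ‖A'‖ + ‖H0'‖ ^ 2 * K + K * ‖H0‖ ^ 2) * ‖D‖
          + (2 * K * ‖A' - A‖ + K ^ 2 * (‖H0'‖ + ‖H0‖) * ‖H0' - H0‖ + ‖M' - M‖) := by ring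
  simpa [hG, hG', ContinuousLinearMap.mul_def, ContinuousLinearMap.comp_assoc] using main

set_option maxHeartbeats 1000000 in
/-- Convergence of solutions of backward operator Riccati equations under
operator-norm convergence of the coefficients. -/
theorem stmt_9
    {H : Type*} [NormedAddCommGroup H] [InnerProductSpace ℝ H] [CompleteSpace H]
    (T : ℝ) (hT : 0 < T)
    (A H0 M MT : H →L[ℝ] H) (AN H0N MN MTN : ℕ → H →L[ℝ] H)
    (hAconv : Tendsto (fun N => ‖AN N - A‖) atTop (nhds 0))
    (hH0conv : Tendsto (fun N => ‖H0N N - H0‖) atTop (nhds 0))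
    (hMconv : Tendsto (fun N => ‖MN N - M‖) atTop (nhds 0))
    (hMTconv : Tendsto (fun N => ‖MTN N - MT‖) atTop (nhds 0))
    (S : ℝ → H →L[ℝ] H) (SN : ℕ → ℝ → H →L[ℝ] H)
    (hSsa : ∀ t ∈ Set.Icc (0 : ℝ) T, IsSelfAdjoint (S t))
    (hSNsa : ∀ N, ∀ t ∈ Set.Icc (0 : ℝ) T, IsSelfAdjoint (SN N t))
    (hSderiv : ∀ t ∈ Set.Icc (0 : ℝ) T,
      HasDerivWithinAt S
        (-((adjoint A).comp (S t) + (S t).comp A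
            - (S t).comp (H0.comp ((adjoint H0).comp (S t))) + M))
        (Set.Icc (0 : ℝ) T) t)
    (hSterm : S T = MT)
    (hSNderiv : ∀ N, ∀ t ∈ Set.Icc (0 : ℝ) T,
      HasDerivWithinAt (SN N)
        (-((adjoint (AN N)).comp (SN N t) + (SN N t).comp (AN N)
            - (SN N t).comp ((H0N N).comp ((adjoint (H0N N)).comp (SN N t))) + MN N))
        (Set.Icc (0 : ℝ) T) t)
    (hSNterm : ∀ N, SN N T = MTN N)
    (K : ℝ)
    (hK : ∀ t ∈ Set.Icc (0 : ℝ) T, ‖S t‖ ≤ K)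
    (hKN : ∀ N, ∀ t ∈ Set.Icc (0 : ℝ) T, ‖SN N t‖ ≤ K) :
    ∀ t ∈ Set.Icc (0 : ℝ) T,
      Tendsto (fun N => ‖SN N t - S t‖) atTop (nhds 0) := by
  intro t ht
  have hK0 : 0 ≤ K := le_trans (norm_nonneg _) (hK t ht)
  set a : ℝ := ‖A‖ + 1 with ha
  set h : ℝ := ‖H0‖ + 1 with hh
  set L : ℝ := 2 * a + h ^ 2 * K + K * ‖H0‖ ^ 2 with hL
  have hLpos : 0 < L := by
    have h1 : (0:ℝ) < a := by positivity
    have h2 : (0:ℝ) ≤ h ^ 2 * K := by positivity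
    have h3 : (0:ℝ) ≤ K * ‖H0‖ ^ 2 := by positivity
    rw [hL]; linarith
  have hTt : T - t ∈ Set.Icc (0:ℝ) T := ⟨by linarith [ht.2], by linarith [ht.1]⟩
  set c : ℝ := Real.exp (L * (T - t)) with hc
  -- the dominating sequence
  set bnd : ℕ → ℝ := fun N =>
    ‖MTN N - MT‖ * c
      + (2 * K * ‖AN N - A‖ + K ^ 2 * (h + ‖H0‖) * ‖H0N N - H0‖ + ‖MN N - M‖) / L
        * (c - 1) with hbnd
  have hbtend : Tendsto bnd atTop (nhds 0) := by
    have t1 : Tendsto (fun N => ‖MTN N - MT‖ * c) atTop (nhds (0 * c)) :=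
      hMTconv.mul_const c
    have t2 : Tendsto (fun N =>
        (2 * K * ‖AN N - A‖ + K ^ 2 * (h + ‖H0‖) * ‖H0N N - H0‖ + ‖MN N - M‖) / L
          * (c - 1)) atTop
        (nhds ((2 * K * 0 + K ^ 2 * (h + ‖H0‖) * 0 + 0) / L * (c - 1))) :=
      ((((hAconv.const_mul (2 * K)).add (hH0conv.const_mul (K ^ 2 * (h + ‖H0‖)))).add
        hMconv).div_const L).mul_const (c - 1)
    have := t1.add t2
    simpa using this
  refine squeeze_zero' (Eventually.of_forall fun N => norm_nonneg _) ?_ hbtend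
  have hevA : ∀ᶠ N in atTop, ‖AN N - A‖ ≤ 1 :=
    (hAconv.eventually (ge_mem_nhds one_pos)).mono fun N hN => hN
  have hevH : ∀ᶠ N in atTop, ‖H0N N - H0‖ ≤ 1 :=
    (hH0conv.eventually (ge_mem_nhds one_pos)).mono fun N hN => hN
  filter_upwards [hevA, hevH] with N heA heH
  -- per-N Gronwall estimate
  set ε : ℝ := 2 * K * ‖AN N - A‖ + K ^ 2 * (h + ‖H0‖) * ‖H0N N - H0‖ + ‖MN N - M‖ with hε
  set δ : ℝ := ‖MTN N - MT‖ with hδ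
  have hANn : ‖AN N‖ ≤ a := by
    have : ‖AN N‖ = ‖A + (AN N - A)‖ := by rw [add_sub_cancel]
    rw [this, ha]
    exact le_trans (norm_add_le _ _) (by linarith)
  have hH0n : ‖H0N N‖ ≤ h := by
    have : ‖H0N N‖ = ‖H0 + (H0N N - H0)‖ := by rw [add_sub_cancel]
    rw [this, hh]
    exact le_trans (norm_add_le _ _) (by linarith)
  -- the difference and its derivative
  set D : ℝ → H →L[ℝ] H := fun τ => SN N τ - S τ with hD
  set v : ℝ → H →L[ℝ] H := fun τ =>
    (-((adjoint (AN N)).comp (SN N τ) + (SN N τ).comp (AN N)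
        - (SN N τ).comp ((H0N N).comp ((adjoint (H0N N)).comp (SN N τ))) + MN N))
      - (-((adjoint A).comp (S τ) + (S τ).comp A
        - (S τ).comp (H0.comp ((adjoint H0).comp (S τ))) + M)) with hv
  have hDd : ∀ τ ∈ Set.Icc (0:ℝ) T, HasDerivWithinAt D (v τ) (Set.Icc 0 T) τ :=
    fun τ hτ => (hSNderiv N τ hτ).sub (hSderiv τ hτ)
  -- time reversal
  have hmaps : Set.MapsTo (fun s : ℝ => T - s) (Set.Icc 0 T) (Set.Icc 0 T) :=
    fun s hs => ⟨by simp only [Set.mem_Icc] at hs ⊢; linarith [hs.2],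
      by simp only [Set.mem_Icc] at hs ⊢; linarith [hs.1]⟩
  set g : ℝ → H →L[ℝ] H := fun s => D (T - s) with hg
  have hgderiv : ∀ s ∈ Set.Icc (0:ℝ) T,
      HasDerivWithinAt g ((-1 : ℝ) • v (T - s)) (Set.Icc 0 T) s := by
    intro s hs
    have hrev : HasDerivWithinAt (fun s : ℝ => T - s) (-1) (Set.Icc 0 T) s := by
      simpa using ((hasDerivAt_id s).const_sub T).hasDerivWithinAt
    exact HasDerivWithinAt.scomp s (hDd (T - s) (hmaps hs)) hrev hmaps
  have hgc : ContinuousOn g (Set.Icc 0 T) := fun s hs =>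
    (hgderiv s hs).continuousWithinAt
  have hg0 : ‖g 0‖ ≤ δ := by
    have : g 0 = MTN N - MT := by
      simp only [hg, hD, sub_zero, hSNterm N, hSterm]
    rw [this]
  -- derivative bound
  have hbound : ∀ s ∈ Set.Ico (0:ℝ) T, ‖(-1 : ℝ) • v (T - s)‖ ≤ L * ‖g s‖ + ε := by
    intro s hs
    have hτ : T - s ∈ Set.Icc (0:ℝ) T := hmaps (Set.Ico_subset_Icc_self hs)
    have hest := riccati_est A (AN N) H0 (H0N N) M (MN N) (S (T - s)) (SN N (T - s)) K
      (hK _ hτ) (hKN N _ hτ)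
    have hnv : ‖(-1 : ℝ) • v (T - s)‖
        = ‖((adjoint (AN N)).comp (SN N (T - s)) + (SN N (T - s)).comp (AN N)
            - (SN N (T - s)).comp ((H0N N).comp ((adjoint (H0N N)).comp (SN N (T - s))))
            + MN N)
          - ((adjoint A).comp (S (T - s)) + (S (T - s)).comp A
            - (S (T - s)).comp (H0.comp ((adjoint H0).comp (S (T - s)))) + M)‖ := by
      rw [neg_one_smul, norm_neg, hv]
      dsimp only
      rw [neg_sub_neg]
      exact norm_sub_rev _ _
    rw [hnv]
    have hgs : ‖g s‖ = ‖SN N (T - s) - S (T - s)‖ := rfl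
    rw [hgs]
    have hnn : (0:ℝ) ≤ ‖SN N (T - s) - S (T - s)‖ := norm_nonneg _
    have hcoef : 2 * ‖AN N‖ + ‖H0N N‖ ^ 2 * K + K * ‖H0‖ ^ 2 ≤ L := by
      rw [hL]
      have : ‖H0N N‖ ^ 2 ≤ h ^ 2 := by nlinarith [norm_nonneg (H0N N)]
      nlinarith
    have hεge : 2 * K * ‖AN N - A‖ + K ^ 2 * (‖H0N N‖ + ‖H0‖) * ‖H0N N - H0‖
        + ‖MN N - M‖ ≤ ε := by
      rw [hε]
      have : K ^ 2 * (‖H0N N‖ + ‖H0‖) ≤ K ^ 2 * (h + ‖H0‖) := by nlinarith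
      nlinarith [norm_nonneg (H0N N - H0)]
    calc _ ≤ (2 * ‖AN N‖ + ‖H0N N‖ ^ 2 * K + K * ‖H0‖ ^ 2) * ‖SN N (T - s) - S (T - s)‖
          + (2 * K * ‖AN N - A‖ + K ^ 2 * (‖H0N N‖ + ‖H0‖) * ‖H0N N - H0‖
            + ‖MN N - M‖) := hest
      _ ≤ L * ‖SN N (T - s) - S (T - s)‖ + ε :=
          add_le_add (mul_le_mul_of_nonneg_right hcoef hnn) hεge
  -- Gronwall
  have hIci : ∀ s ∈ Set.Ico (0:ℝ) T,
      HasDerivWithinAt g ((-1 : ℝ) • v (T - s)) (Set.Ici s) s := fun s hs =>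
    (hgderiv s (Set.Ico_subset_Icc_self hs)).mono_of_mem_nhdsWithin (Icc_mem_nhdsGE_of_mem hs)
  have hgw := norm_le_gronwallBound_of_norm_deriv_right_le hgc hIci hg0 hbound
  have hfinal := hgw (T - t) hTt
  rw [gronwallBound_of_K_ne_0 hLpos.ne'] at hfinal
  have hgTt : g (T - t) = SN N t - S t := by
    simp only [hg, hD, sub_sub_cancel]
  rw [hgTt, sub_zero] at hfinal
  calc ‖SN N t - S t‖ ≤ δ * Real.exp (L * (T - t))
        + ε / L * (Real.exp (L * (T - t)) - 1) := hfinal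
    _ = bnd N := by rw [hbnd, hc, hδ, hε]
end

section
/- For every x ∈ [0,1], ∫₀¹ (1 − max(x, y)) · cos(π y / 2) dy = (4/π²) · cos(π x / 2). Consequently, the function φ(x) = cos(πx/2) is an eigenfunction, with eigenvalue 4/π², of the integral operator on L²[0,1] with kernel W(x,y) = 1 − max(x,y). -/
open MeasureTheory Real

lemma key (x : ℝ) (hx : x ∈ Set.Icc (0:ℝ) 1) :
    ∫ y in Set.Icc (0 : ℝ) 1, (1 - max x y) * Real.cos (π * y / 2)
      = (4 / π ^ 2) * Real.cos (π * x / 2) := by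
  obtain ⟨hx0, hx1⟩ := hx
  have hpi : (π:ℝ) ≠ 0 := Real.pi_ne_zero
  have h1 : ∫ y in Set.Icc (0 : ℝ) 1, (1 - max x y) * Real.cos (π * y / 2)
      = ∫ y in (0:ℝ)..1, (1 - max x y) * Real.cos (π * y / 2) := by
    rw [intervalIntegral.integral_of_le (by norm_num), MeasureTheory.integral_Icc_eq_integral_Ioc]
  rw [h1, ← intervalIntegral.integral_add_adjacent_intervals (a := 0) (b := x) (c := 1)
    (by
      apply IntervalIntegrable.mul_continuousOn
      · exact (intervalIntegrable_const.sub ((continuous_const.max continuous_id).intervalIntegrable _ _))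
      · exact (Real.continuous_cos.comp (by continuity)).continuousOn
      )
    (by
      apply IntervalIntegrable.mul_continuousOn
      · exact (intervalIntegrable_const.sub ((continuous_const.max continuous_id).intervalIntegrable _ _))
      · exact (Real.continuous_cos.comp (by continuity)).continuousOn
      )]
  have e1 : ∫ y in (0:ℝ)..x, (1 - max x y) * Real.cos (π * y / 2)
      = ∫ y in (0:ℝ)..x, (1 - x) * Real.cos (π * y / 2) := by
    apply intervalIntegral.integral_congr
    intro y hy
    rw [Set.uIcc_of_le hx0] at hy
    simp only [max_eq_left hy.2]
  have e2 : ∫ y in x..(1:ℝ), (1 - max x y) * Real.cos (π * y / 2)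
      = ∫ y in x..(1:ℝ), (1 - y) * Real.cos (π * y / 2) := by
    apply intervalIntegral.integral_congr
    intro y hy
    rw [Set.uIcc_of_le hx1] at hy
    simp only [max_eq_right hy.1]
  have d1 : ∀ y : ℝ, HasDerivAt (fun y => (1 - x) * ((2/π) * Real.sin (π * y / 2)))
      ((1 - x) * Real.cos (π * y / 2)) y := by
    intro y
    have h : HasDerivAt (fun y : ℝ => π * y / 2) (π / 2) y := by
      simpa using ((hasDerivAt_id y).const_mul π).div_const 2
    have := ((h.sin).const_mul (2/π)).const_mul (1 - x)
    refine this.congr_deriv ?_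
    field_simp
  have d2 : ∀ y : ℝ, HasDerivAt
      (fun y => (2/π) * (1 - y) * Real.sin (π * y / 2) - (4/π^2) * Real.cos (π * y / 2))
      ((1 - y) * Real.cos (π * y / 2)) y := by
    intro y
    have h : HasDerivAt (fun y : ℝ => π * y / 2) (π / 2) y := by
      simpa using ((hasDerivAt_id y).const_mul π).div_const 2
    have hs := h.sin
    have hc := h.cos
    have hl : HasDerivAt (fun y : ℝ => (2/π) * (1 - y)) (-(2/π)) y := by
      simpa using ((hasDerivAt_id y).const_sub 1).const_mul (2/π)
    have := (hl.mul hs).sub (hc.const_mul (4/π^2))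
    refine this.congr_deriv ?_
    field_simp
    ring
  rw [e1, e2,
    intervalIntegral.integral_eq_sub_of_hasDerivAt (fun y _ => d1 y)
      ((continuous_const.mul (Real.continuous_cos.comp (by continuity))).intervalIntegrable _ _),
    intervalIntegral.integral_eq_sub_of_hasDerivAt (fun y _ => d2 y)
      (by
        apply Continuous.intervalIntegrable
        exact (continuous_const.sub continuous_id).mul (Real.continuous_cos.comp (by continuity)))]
  simp [Real.sin_pi_div_two, Real.cos_pi_div_two, mul_one_div]
  field_simp
  ring

/-- For every `x ∈ [0,1]`, `∫₀¹ (1 − max(x,y)) cos(πy/2) dy = (4/π²) cos(πx/2)`;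
consequently `cos(πx/2)` is an eigenfunction with eigenvalue `4/π²` of the
integral operator on `L²[0,1]` with the uniform attachment graphon kernel
`W(x,y) = 1 − max(x,y)`. -/
theorem stmt_13 :
    (∀ x ∈ Set.Icc (0 : ℝ) 1,
      ∫ y in Set.Icc (0 : ℝ) 1, (1 - max x y) * Real.cos (π * y / 2)
        = (4 / π ^ 2) * Real.cos (π * x / 2)) ∧
    ∀ (T : Lp ℝ 2 (volume.restrict (Set.Icc (0 : ℝ) 1))
        →L[ℝ] Lp ℝ 2 (volume.restrict (Set.Icc (0 : ℝ) 1))),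
      (∀ f : Lp ℝ 2 (volume.restrict (Set.Icc (0 : ℝ) 1)),
        (T f : ℝ → ℝ) =ᵐ[volume.restrict (Set.Icc (0 : ℝ) 1)]
          fun x => ∫ y, (1 - max x y) * f y ∂(volume.restrict (Set.Icc (0 : ℝ) 1))) →
      ∀ φ : Lp ℝ 2 (volume.restrict (Set.Icc (0 : ℝ) 1)),
        (φ : ℝ → ℝ) =ᵐ[volume.restrict (Set.Icc (0 : ℝ) 1)]
          (fun x => Real.cos (π * x / 2)) →
        T φ = (4 / π ^ 2 : ℝ) • φ := by
  refine ⟨key, ?_⟩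
  intro T hT φ hφ
  apply Lp.ext
  have h1 : (T φ : ℝ → ℝ) =ᵐ[volume.restrict (Set.Icc (0:ℝ) 1)] fun x => ∫ y, (1 - max x y) * φ y ∂(volume.restrict (Set.Icc (0:ℝ) 1)) := hT φ
  have h2 : (fun x => ∫ y, (1 - max x y) * φ y ∂(volume.restrict (Set.Icc (0:ℝ) 1)))
      =ᵐ[volume.restrict (Set.Icc (0:ℝ) 1)] fun x => (4 / π ^ 2) * Real.cos (π * x / 2) := by
    filter_upwards [ae_restrict_mem measurableSet_Icc] with x hx
    have : ∫ y, (1 - max x y) * φ y ∂(volume.restrict (Set.Icc (0:ℝ) 1))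
        = ∫ y, (1 - max x y) * Real.cos (π * y / 2) ∂(volume.restrict (Set.Icc (0:ℝ) 1)) := by
      apply integral_congr_ae
      filter_upwards [hφ] with y hy
      rw [hy]
    rw [this]
    exact key x hx
  have h3 : (fun x => (4 / π ^ 2) * Real.cos (π * x / 2)) =ᵐ[volume.restrict (Set.Icc (0:ℝ) 1)]
      ((4 / π ^ 2 : ℝ) • φ : Lp ℝ 2 (volume.restrict (Set.Icc (0:ℝ) 1))) := by
    filter_upwards [hφ, Lp.coeFn_smul (4 / π ^ 2 : ℝ) φ] with x hx hs
    rw [hs, Pi.smul_apply, hx, smul_eq_mul]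
  exact (h1.trans h2).trans h3
end
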